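/- Let α, β : Bool → Bool → Bool be essential binary operations, and let σ : Bool × Bool → Bool × Bool be the brassiere map σ(x, y) = (α x y, β x y). Then σ satisfies the Artin prebraid (Yang–Baxter) relation (σ × id) ∘ (id × σ) ∘ (σ × id) = (id × σ) ∘ (σ × id) ∘ (id × σ) if and only if α ∈ {and, or} and β ∈ {and, or}; in particular, exactly four prebraids arise from pairs of essential binary Boolean operations, namely those built from conjunction and disjunction only. -/
import Mathlib


/-- The Artin prebraid (Yang–Baxter) relation for a map `σ : S × S → S × S`. -/
def ArtinPrebraid {S : Type*} (σ : S × S → S × S) : Prop :=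
  (fun p : S × S × S => ((σ (p.1, p.2.1)).1, (σ (p.1, p.2.1)).2, p.2.2)) ∘
      (fun p : S × S × S => (p.1, σ p.2)) ∘
      (fun p : S × S × S => ((σ (p.1, p.2.1)).1, (σ (p.1, p.2.1)).2, p.2.2)) =
    (fun p : S × S × S => (p.1, σ p.2)) ∘
      (fun p : S × S × S => ((σ (p.1, p.2.1)).1, (σ (p.1, p.2.1)).2, p.2.2)) ∘
      (fun p : S × S × S => (p.1, σ p.2))

/-- A binary operation is essential if it factors through neither projection. -/
def EssentialBinary {S : Type*} (f : S → S → S) : Prop :=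
  (¬ ∃ g : S → S, ∀ x y : S, f x y = g x) ∧ (¬ ∃ g : S → S, ∀ x y : S, f x y = g y)


private lemma bool_fn_eq (f : Bool → Bool → Bool) :
    f = fun x y => cond x (cond y (f true true) (f true false))
      (cond y (f false true) (f false false)) := by
  funext x y; cases x <;> cases y <;> rfl

/-- for essential binary Boolean operations `α, β`, the brassiere map
satisfies the Artin prebraid relation iff `α ∈ {and, or}` and `β ∈ {and, or}`. -/
theorem bool_prebraid_iff_and_or (α β : Bool → Bool → Bool)
    (hα : EssentialBinary α) (hβ : EssentialBinary β) :
    ArtinPrebraid (fun p : Bool × Bool => (α p.1 p.2, β p.1 p.2)) ↔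
      ((α = Bool.and ∨ α = Bool.or) ∧ (β = Bool.and ∨ β = Bool.or)) := by
  have h1 := bool_fn_eq α
  have h2 := bool_fn_eq β
  set a := α true true with ha
  set b := α true false with hb
  set c := α false true with hc
  set d := α false false with hd
  set a' := β true true with ha'
  set b' := β true false with hb'
  set c' := β false true with hc'
  set d' := β false false with hd'
  rw [h1] at hα ⊢
  rw [h2] at hβ ⊢
  revert hα hβ
  unfold ArtinPrebraid EssentialBinary
  set_option maxHeartbeats 4000000 in
  set_option synthInstance.maxSize 1000 in
  set_option synthInstance.maxHeartbeats 1000000 in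
  (cases a <;> cases b <;> cases c <;> cases d <;>
    cases a' <;> cases b' <;> cases c' <;> cases d' <;> decide)
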